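/- For every x ∈ ℝ^d and every minimizer x* of F: (1/n) Σ_{i=1}^n ‖∇f_i(x) − ∇f(x*)‖² ≤ 4 L_max · D_f(x, x*) + 2σ², where σ² = (1/n) Σ_{i=1}^n ‖∇f_i(x*)‖² and L_max = max_{i∈[n]} L_i. (This shows that uniform-sampling SGD gradient estimates g = ∇f_i(x) satisfy the unified variance bound with A = 2L_max, B = C = 0, ρ = 1, D_1 = 2σ², D_2 = 0.) -/

import Mathlib

open Finset
open scoped RealInnerProductSpace

lemma key_cocoercive {d : ℕ} (f : EuclideanSpace ℝ (Fin d) → ℝ)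
    (f' : EuclideanSpace ℝ (Fin d) → EuclideanSpace ℝ (Fin d)) (L : ℝ)
    (hs : ∀ x y, f y ≤ f x + ⟪f' x, y - x⟫ + L / 2 * ‖y - x‖ ^ 2)
    (hc : ∀ x y, f x + ⟪f' x, y - x⟫ ≤ f y) (x y : EuclideanSpace ℝ (Fin d)) :
    ‖f' x - f' y‖ ^ 2 ≤ 2 * L * (f x - f y - ⟪f' y, x - y⟫) := by
  set v := f' x - f' y with hv
  by_cases hL : 0 < L
  · set z := x - (1/L) • v with hz
    have h1 := hs x z
    have h2 := hc y z
    have hzx : z - x = -((1/L) • v) := by rw [hz]; abel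
    have e1 : ⟪f' x, z - x⟫ = -((1/L) * ⟪f' x, v⟫) := by
      rw [hzx, inner_neg_right, real_inner_smul_right]
    have e2 : ‖z - x‖ ^ 2 = (1/L)^2 * ‖v‖ ^ 2 := by
      rw [hzx, norm_neg, norm_smul]
      simp [mul_pow, abs_of_pos (by positivity : (0:ℝ) < 1/L)]
    have hzy : z - y = (x - y) - (1/L) • v := by rw [hz]; abel
    have e3 : ⟪f' y, z - y⟫ = ⟪f' y, x - y⟫ - (1/L) * ⟪f' y, v⟫ := by
      rw [hzy, inner_sub_right, real_inner_smul_right]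
    have e4 : ⟪f' x, v⟫ - ⟪f' y, v⟫ = ‖v‖ ^ 2 := by
      rw [← inner_sub_left, ← hv, ← real_inner_self_eq_norm_sq]
    rw [e1, e2] at h1
    rw [e3] at h2
    have hL' : L ≠ 0 := ne_of_gt hL
    have e5 : L / 2 * ((1/L)^2 * ‖v‖^2) = ‖v‖^2 / (2*L) := by field_simp
    have e6 : 1/L * ⟪f' x, v⟫ - 1/L * ⟪f' y, v⟫ = ‖v‖^2 / L := by
      rw [← mul_sub, e4]; field_simp
    have e7 : ‖v‖^2 / L - ‖v‖^2/(2*L) = ‖v‖^2/(2*L) := by field_simp; ring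
    have h7 : ‖v‖^2/(2*L) ≤ f x - f y - ⟪f' y, x - y⟫ := by linarith
    rw [div_le_iff₀ (by positivity)] at h7
    nlinarith [h7]
  · push_neg at hL
    have heq : ∀ a b, f b = f a + ⟪f' a, b - a⟫ := by
      intro a b
      have h1 := hs a b
      have h2 := hc a b
      have : L / 2 * ‖b - a‖ ^ 2 ≤ 0 :=
        mul_nonpos_of_nonpos_of_nonneg (by linarith) (sq_nonneg _)
      linarith
    have hv0 : v = 0 := by
      have h1 : f (y + v) = f x + ⟪f' x, (y + v) - x⟫ := heq x (y + v)
      have h2 : f (y + v) = f y + ⟪f' y, (y + v) - y⟫ := heq y (y + v)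
      have h3 : f y = f x + ⟪f' x, y - x⟫ := heq x y
      have h4 : ⟪f' x, (y + v) - x⟫ = ⟪f' x, y - x⟫ + ⟪f' x, v⟫ := by
        rw [show (y + v) - x = (y - x) + v by abel, inner_add_right]
      have h5 : ⟪f' y, (y + v) - y⟫ = ⟪f' y, v⟫ := by
        rw [show (y + v) - y = v by abel]
      have h6 : ⟪f' x, v⟫ = ⟪f' y, v⟫ := by
        rw [h4] at h1; rw [h5] at h2; linarith
      have : ⟪v, v⟫ = 0 := by rw [hv, inner_sub_left]; linarith
      exact inner_self_eq_zero.mp this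
    have hD : f x - f y - ⟪f' y, x - y⟫ = 0 := by
      have := heq y x; linarith
    rw [hv0, hD]
    simp

/-- Lemma 1: for uniform-sampling SGD on a finite sum, for every `x` and any
minimizer `x*` of `F = f + R`,
`(1/n) Σᵢ ‖∇fᵢ(x) − ∇f(x*)‖² ≤ 4 L_max D_f(x, x*) + 2σ²` where
`σ² = (1/n) Σᵢ ‖∇fᵢ(x*)‖²` and `L_max = maxᵢ Lᵢ`. -/
theorem stmt_3
    {d n : ℕ} (hn : 0 < n)
    (f : Fin n → EuclideanSpace ℝ (Fin d) → ℝ)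
    (f' : Fin n → EuclideanSpace ℝ (Fin d) → EuclideanSpace ℝ (Fin d))
    (Li : Fin n → ℝ)
    (hsmooth : ∀ i x y, f i y ≤ f i x + ⟪f' i x, y - x⟫ + Li i / 2 * ‖y - x‖ ^ 2)
    (hconv : ∀ i x y, f i x + ⟪f' i x, y - x⟫ ≤ f i y)
    (R : EuclideanSpace ℝ (Fin d) → ℝ) (hR : ConvexOn ℝ Set.univ R)
    (xstar : EuclideanSpace ℝ (Fin d))
    (hmin : ∀ y, (n : ℝ)⁻¹ * ∑ i, f i xstar + R xstar ≤ (n : ℝ)⁻¹ * ∑ i, f i y + R y)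
    (x : EuclideanSpace ℝ (Fin d)) :
    (n : ℝ)⁻¹ * ∑ i, ‖f' i x - (n : ℝ)⁻¹ • ∑ j, f' j xstar‖ ^ 2
    ≤ 4 * (Finset.univ.sup' ⟨⟨0, hn⟩, Finset.mem_univ _⟩ Li)
        * ((n : ℝ)⁻¹ * ∑ i, f i x - (n : ℝ)⁻¹ * ∑ i, f i xstar
          - ⟪(n : ℝ)⁻¹ • ∑ j, f' j xstar, x - xstar⟫)
      + 2 * ((n : ℝ)⁻¹ * ∑ i, ‖f' i xstar‖ ^ 2) := by
  classical
  set c : EuclideanSpace ℝ (Fin d) := (n : ℝ)⁻¹ • ∑ j, f' j xstar with hcdef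
  set L : ℝ := Finset.univ.sup' ⟨⟨0, hn⟩, Finset.mem_univ _⟩ Li with hLdef
  set D : Fin n → ℝ := fun i => f i x - f i xstar - ⟪f' i xstar, x - xstar⟫ with hDdef
  have hninv : (0:ℝ) ≤ (n:ℝ)⁻¹ := by positivity
  have hnne : (n:ℝ) ≠ 0 := by positivity
  have hD : ∀ i, 0 ≤ D i := by
    intro i
    have := hconv i xstar x
    simp only [hDdef]
    linarith
  have hLi : ∀ i, Li i ≤ L := fun i => Finset.le_sup' Li (Finset.mem_univ i)
  have hkey : ∀ i, ‖f' i x - f' i xstar‖ ^ 2 ≤ 2 * L * D i := by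
    intro i
    have h1 := key_cocoercive (f i) (f' i) (Li i) (hsmooth i) (hconv i) x xstar
    have h2 : 2 * Li i * D i ≤ 2 * L * D i := by
      have := mul_le_mul_of_nonneg_right (hLi i) (hD i)
      nlinarith
    exact le_trans h1 h2
  have hper : ∀ i, ‖f' i x - c‖ ^ 2 ≤ 4 * L * D i + 2 * ‖f' i xstar - c‖ ^ 2 := by
    intro i
    have htri : ‖f' i x - c‖ ≤ ‖f' i x - f' i xstar‖ + ‖f' i xstar - c‖ :=
      norm_sub_le_norm_sub_add_norm_sub _ _ _
    nlinarith [hkey i, norm_nonneg (f' i x - c), norm_nonneg (f' i x - f' i xstar),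
      norm_nonneg (f' i xstar - c),
      sq_nonneg (‖f' i x - f' i xstar‖ - ‖f' i xstar - c‖)]
  have hS : ∑ j, f' j xstar = (n:ℝ) • c := by
    rw [hcdef, smul_smul, mul_inv_cancel₀ hnne, one_smul]
  have hin : ∑ i, ⟪f' i xstar, c⟫ = (n:ℝ) * ‖c‖ ^ 2 := by
    rw [← sum_inner, hS, real_inner_smul_left, real_inner_self_eq_norm_sq]
  have hsum2 : ∑ i, ‖f' i xstar - c‖ ^ 2 ≤ ∑ i, ‖f' i xstar‖ ^ 2 := by
    have expand : ∀ i ∈ Finset.univ,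
        ‖f' i xstar - c‖ ^ 2 = ‖f' i xstar‖ ^ 2 - 2 * ⟪f' i xstar, c⟫ + ‖c‖ ^ 2 :=
      fun i _ => norm_sub_sq_real _ _
    rw [Finset.sum_congr rfl expand, Finset.sum_add_distrib, Finset.sum_sub_distrib,
      Finset.sum_const, ← Finset.mul_sum, hin]
    simp only [Finset.card_univ, Fintype.card_fin, nsmul_eq_mul]
    nlinarith [sq_nonneg ‖c‖, (by exact_mod_cast Nat.cast_pos.mpr hn : (0:ℝ) < n)]
  have h1 : ∑ i, ‖f' i x - c‖ ^ 2 ≤ 4 * L * (∑ i, D i) + 2 * ∑ i, ‖f' i xstar‖ ^ 2 := by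
    calc ∑ i, ‖f' i x - c‖ ^ 2 ≤ ∑ i, (4 * L * D i + 2 * ‖f' i xstar - c‖ ^ 2) :=
          Finset.sum_le_sum fun i _ => hper i
      _ = 4 * L * (∑ i, D i) + 2 * ∑ i, ‖f' i xstar - c‖ ^ 2 := by
          rw [Finset.sum_add_distrib, ← Finset.mul_sum, ← Finset.mul_sum]
      _ ≤ _ := by linarith [hsum2]
  have h2 := mul_le_mul_of_nonneg_left h1 hninv
  have hDsum : ∑ i, D i = ∑ i, f i x - ∑ i, f i xstar - ∑ i, ⟪f' i xstar, x - xstar⟫ := by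
    simp only [hDdef]
    rw [Finset.sum_sub_distrib, Finset.sum_sub_distrib]
  have hinner : ⟪c, x - xstar⟫ = (n:ℝ)⁻¹ * ∑ i, ⟪f' i xstar, x - xstar⟫ := by
    rw [hcdef, real_inner_smul_left, sum_inner]
  calc (n : ℝ)⁻¹ * ∑ i, ‖f' i x - c‖ ^ 2
      ≤ (n : ℝ)⁻¹ * (4 * L * (∑ i, D i) + 2 * ∑ i, ‖f' i xstar‖ ^ 2) := h2
    _ = 4 * L * ((n : ℝ)⁻¹ * ∑ i, f i x - (n : ℝ)⁻¹ * ∑ i, f i xstar - ⟪c, x - xstar⟫)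
        + 2 * ((n : ℝ)⁻¹ * ∑ i, ‖f' i xstar‖ ^ 2) := by
        rw [hDsum, hinner]; ring
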